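/- Let V be a finite-dimensional real vector space, let θ be a nonzero linear functional on V, set H = ker θ, and let ω be an alternating bilinear form on V whose restriction to H × H is nondegenerate. Then there exists a unique vector X₀ ∈ V such that θ(X₀) = 1 and ω(X₀, v) = 0 for all v ∈ V. -/

import Mathlib

/-- existence and uniqueness of the Reeb vector: let `V` be a finite-dimensional
real vector space, `θ` a nonzero linear functional on `V`, `H = ker θ`, and `ω` an alternating
bilinear form on `V` whose restriction to `H × H` is nondegenerate. Then there exists a unique
vector `X₀ ∈ V` such that `θ X₀ = 1` and `ω X₀ v = 0` for all `v ∈ V`. -/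
theorem exists_unique_reeb_vector {V : Type*} [AddCommGroup V] [Module ℝ V]
    [FiniteDimensional ℝ V]
    (θ : Module.Dual ℝ V) (hθ : θ ≠ 0)
    (ω : V →ₗ[ℝ] V →ₗ[ℝ] ℝ)
    (halt : ∀ v : V, ω v v = 0)
    (hnondeg : ∀ v ∈ LinearMap.ker θ, (∀ w ∈ LinearMap.ker θ, ω v w = 0) → v = 0) :
    ∃! X₀ : V, θ X₀ = 1 ∧ ∀ v : V, ω X₀ v = 0 := by
  set H := LinearMap.ker θ with hH
  -- find e with θ e = 1
  obtain ⟨u, hu⟩ : ∃ u, θ u ≠ 0 := by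
    by_contra h
    push_neg at h
    exact hθ (LinearMap.ext fun v => by simpa using h v)
  set e : V := (θ u)⁻¹ • u with he
  have hθe : θ e = 1 := by
    simp [he, inv_mul_cancel₀ hu]
  -- bilinear form on H
  set B : H →ₗ[ℝ] H →ₗ[ℝ] ℝ := ω.compl₁₂ H.subtype H.subtype with hB
  have hBapp : ∀ x y : H, B x y = ω x y := fun x y => rfl
  have hBnd : LinearMap.BilinForm.Nondegenerate B := by
    apply LinearMap.BilinForm.Nondegenerate.ofSeparatingLeft
    intro x hx
    have : (x : V) = 0 := hnondeg x x.2 (fun w hw => hx ⟨w, hw⟩)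
    exact Subtype.ext this
  set φ : Module.Dual ℝ H := -((ω e).comp H.subtype) with hφ
  obtain ⟨h, hh⟩ : ∃ h : H, B h = φ :=
    (LinearMap.BilinForm.toDual B hBnd).surjective φ
  refine ⟨e + (h : V), ⟨by simp [hθe, h.2], ?_⟩, ?_⟩
  · -- vanishing of ω (e + h) on all of V
    have hker : ∀ w : V, w ∈ H → ω (e + (h : V)) w = 0 := by
      intro w hw
      have := congrArg (fun f => f ⟨w, hw⟩) hh
      simp only [hBapp] at this
      have : ω (h : V) w = -(ω e w) := this
      simp [map_add, this]
    intro v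
    have hXe : ω (e + (h : V)) e = 0 := by
      have h1 : ω (e + (h : V)) (e + (h : V)) = 0 := halt _
      have h2 : ω (e + (h : V)) (h : V) = 0 := hker _ h.2
      have := h1
      rw [map_add, h2, add_zero] at this
      exact this
    have hv : v - θ v • e ∈ H := by
      simp [hH, LinearMap.mem_ker, hθe, mul_comm]
    calc ω (e + (h : V)) v
        = ω (e + (h : V)) (θ v • e) + ω (e + (h : V)) (v - θ v • e) := by
          rw [← map_add]; congr 1; abel
      _ = 0 := by rw [hker _ hv, map_smul, hXe]; simp
  · -- uniqueness
    rintro y ⟨hy1, hy2⟩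
    have hd : y - (e + (h : V)) ∈ H := by
      have : θ (e + (h : V)) = 1 := by simp [hθe, h.2]
      simp [hH, LinearMap.mem_ker, hy1, this]
    have hzero : y - (e + (h : V)) = 0 := by
      apply hnondeg _ hd
      intro w hw
      have hXw : ω (e + (h : V)) w = 0 := by
        have hker : ∀ w : V, w ∈ H → ω (e + (h : V)) w = 0 := by
          intro w hw
          have := congrArg (fun f => f ⟨w, hw⟩) hh
          simp only [hBapp] at this
          have : ω (h : V) w = -(ω e w) := this
          simp [map_add, this]
        exact hker w hw
      have : ω (y - (e + (h : V))) w = ω y w - ω (e + (h : V)) w := by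
        simp [map_sub]
      rw [this, hy2, hXw, sub_zero]
    exact sub_eq_zero.mp hzero
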